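/- The gradient of ℓ_bin(x) = N·(Σₙ xₙ⁴) − (Σₙ xₙ²)² vanishes at x ∈ ℝ^N if and only if x has all coordinates in {−α, α} for some α ∈ ℝ; equivalently, ℓ_bin has no spurious stationary points. Explicitly, ∂ℓ_bin/∂xₙ = 4xₙ(N xₙ² − Σₖ xₖ²) for each n, and these are all zero iff all xₙ² are equal. -/

import Mathlib

theorem lbin_no_spurious_stationary_points (N : ℕ) (hN : 1 ≤ N) (x : Fin N → ℝ) :
    (∀ n, fderiv ℝ (fun y : Fin N → ℝ =>
        (N : ℝ) * (∑ k, y k ^ 4) - (∑ k, y k ^ 2) ^ 2) x (Pi.single n 1) =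
        4 * x n * ((N : ℝ) * x n ^ 2 - ∑ k, x k ^ 2)) ∧
    (fderiv ℝ (fun y : Fin N → ℝ =>
        (N : ℝ) * (∑ k, y k ^ 4) - (∑ k, y k ^ 2) ^ 2) x = 0 ↔
      ∃ α : ℝ, ∀ n, x n = -α ∨ x n = α) := by
  have hNpos : (0:ℝ) < N := by exact_mod_cast hN
  set S : ℝ := ∑ k, x k ^ 2 with hS
  set c : Fin N → ℝ := fun k => 4 * x k * ((N:ℝ) * x k ^ 2 - S) with hc
  set L : (Fin N → ℝ) →L[ℝ] ℝ :=
    ∑ k, c k • (ContinuousLinearMap.proj k : (Fin N → ℝ) →L[ℝ] ℝ) with hL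
  have h1 : HasFDerivAt (fun y : Fin N → ℝ => ∑ k, y k ^ 4)
      (∑ k, ((4:ℝ) * x k ^ 3) • (ContinuousLinearMap.proj k : (Fin N → ℝ) →L[ℝ] ℝ)) x := by
    apply HasFDerivAt.fun_sum
    intro k _
    have := (hasDerivAt_pow 4 (x k)).comp_hasFDerivAt x
      ((ContinuousLinearMap.proj k : (Fin N → ℝ) →L[ℝ] ℝ).hasFDerivAt (x := x))
    exact this
  have h2 : HasFDerivAt (fun y : Fin N → ℝ => ∑ k, y k ^ 2)
      (∑ k, ((2:ℝ) * x k) • (ContinuousLinearMap.proj k : (Fin N → ℝ) →L[ℝ] ℝ)) x := by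
    apply HasFDerivAt.fun_sum
    intro k _
    have := (hasDerivAt_pow 2 (x k)).comp_hasFDerivAt x
      ((ContinuousLinearMap.proj k : (Fin N → ℝ) →L[ℝ] ℝ).hasFDerivAt (x := x))
    rw [show (2:ℝ) * x k = ((2:ℕ):ℝ) * x k ^ (2 - 1) by norm_num]
    exact this
  have hf : HasFDerivAt (fun y : Fin N → ℝ =>
      (N : ℝ) * (∑ k, y k ^ 4) - (∑ k, y k ^ 2) ^ 2) L x := by
    have := (h1.const_mul (N:ℝ)).fun_sub ((hasDerivAt_pow 2 S).comp_hasFDerivAt x h2)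
    refine this.congr_fderiv ?_
    rw [hL, Finset.smul_sum, Finset.smul_sum, ← Finset.sum_sub_distrib]
    refine Finset.sum_congr rfl (fun k _ => ?_)
    rw [smul_smul, smul_smul, ← sub_smul]
    congr 1
    simp only [hc, pow_one]
    ring
  have hfd : fderiv ℝ (fun y : Fin N → ℝ =>
      (N : ℝ) * (∑ k, y k ^ 4) - (∑ k, y k ^ 2) ^ 2) x = L := hf.fderiv
  have happ : ∀ n, L (Pi.single n 1) = c n := by
    intro n
    rw [hL]
    simp [ContinuousLinearMap.sum_apply, Pi.single_apply]
  constructor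
  · intro n
    rw [hfd, happ n]
  · rw [hfd]
    constructor
    · intro h0
      have hcz : ∀ n, c n = 0 := by
        intro n
        rw [← happ n, h0]
        simp
      have key : ∀ n, x n = 0 ∨ (N:ℝ) * x n ^ 2 = S := by
        intro n
        have := hcz n
        simp only [hc] at this
        rcases mul_eq_zero.mp this with h | h
        · rcases mul_eq_zero.mp h with h' | h'
          · norm_num at h'
          · exact Or.inl h'
        · right; linarith
      by_cases hall : ∀ n, x n = 0
      · exact ⟨0, fun n => Or.inr (by simpa using hall n)⟩
      · push_neg at hall
        obtain ⟨m, hm⟩ := hall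
        have hSm : (N:ℝ) * x m ^ 2 = S := (key m).resolve_left hm
        have hSpos : 0 < S := by
          have : 0 < x m ^ 2 := by positivity
          nlinarith
        have hnz : ∀ n, x n ≠ 0 := by
          intro n hn
          have hle : ∀ k, (N:ℝ) * x k ^ 2 ≤ S := by
            intro k
            rcases key k with h | h
            · rw [h]; simp; linarith
            · linarith
          have hlt : (N:ℝ) * x n ^ 2 < S := by rw [hn]; simpa using hSpos
          have : ∑ k, (N:ℝ) * x k ^ 2 < ∑ (_ : Fin N), S := by
            apply Finset.sum_lt_sum (fun k _ => hle k)
            exact ⟨n, Finset.mem_univ n, hlt⟩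
          rw [← Finset.mul_sum, ← hS] at this
          simp only [Finset.sum_const, Finset.card_univ, Fintype.card_fin,
            nsmul_eq_mul] at this
          exact absurd this (lt_irrefl _)
        refine ⟨x m, fun n => ?_⟩
        have hn2 : (N:ℝ) * x n ^ 2 = S := (key n).resolve_left (hnz n)
        have hsq : x n ^ 2 = x m ^ 2 :=
          mul_left_cancel₀ (ne_of_gt hNpos) (hn2.trans hSm.symm)
        have : (x n - x m) * (x n + x m) = 0 := by linear_combination hsq
        rcases mul_eq_zero.mp this with h | h
        · right; linarith
        · left; linarith
    · rintro ⟨α, hα⟩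
      have hsq : ∀ n, x n ^ 2 = α ^ 2 := by
        intro n
        rcases hα n with h | h <;> simp [h]
      have hSval : S = N * α ^ 2 := by
        rw [hS]
        simp [hsq, Finset.sum_const, Finset.card_univ, nsmul_eq_mul]
      have hcz : ∀ k, c k = 0 := by
        intro k
        simp only [hc, hsq k, hSval]
        ring
      rw [hL]
      apply Finset.sum_eq_zero
      intro k _
      rw [hcz k, zero_smul]
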